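/- Let n ≥ 0 be a natural number and x a nonzero real number. Then 2^{−n} · e^{2/x} · [the n-th iterated derivative of y ↦ e^{−2/y}·y^{2n}, evaluated at y = x] equals Σ_{k=0}^{n} ((n+k)!/((n−k)!·k!)) · (x/2)^k, i.e. it equals the Bessel polynomial B_n(x). (Classical Rodrigues formula for the Bessel polynomials, as in Krall–Frink.) -/

import Mathlib

open Real Finset

/-- Coefficients in the iterated-derivative expansion. -/
def besselC (n m k : ℕ) : ℕ :=
  2 ^ (m - k) * m.choose k * Nat.descFactorial (2 * n - m + k) k

lemma besselC_zero (n m : ℕ) : besselC n m 0 = 2 ^ m := by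
  simp [besselC]

lemma besselC_top (n m : ℕ) : besselC n m (m + 1) = 0 := by
  simp [besselC, Nat.choose_succ_self]

lemma besselC_rec (n m k : ℕ) (hm : m + 1 ≤ n) (hk : k ≤ m) :
    besselC n (m + 1) (k + 1) =
      2 * besselC n m (k + 1) + (2 * n - 2 * m + k) * besselC n m k := by
  have ha : m + 2 ≤ 2 * n - m := by omega
  have h1 : 2 * n - (m + 1) + (k + 1) = (2 * n - m) + k := by omega
  have h2 : 2 * n - m + (k + 1) = (2 * n - m) + k + 1 := by omega
  set a := 2 * n - m with haa
  unfold besselC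
  rw [h1, h2]
  rw [Nat.descFactorial_succ, Nat.succ_descFactorial_succ]
  have h3 : a + k - k = a := by omega
  rw [h3]
  rcases Nat.lt_or_ge k m with hkm | hkm
  · -- k < m
    have hpow : (2 : ℕ) ^ (m - k) = 2 * 2 ^ (m - (k + 1)) := by
      rw [← pow_succ']
      congr 1
      omega
    have hch : m.choose (k + 1) * (k + 1) = m.choose k * (m - k) :=
      Nat.choose_succ_right_eq m k
    have hch2 : (m + 1).choose (k + 1) = m.choose (k + 1) + m.choose k := by
      rw [Nat.choose_succ_succ]
      ring
    rw [show m + 1 - (k + 1) = m - k from by omega, hpow, hch2]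
    -- goal: 2 * 2^(m-(k+1)) * (choose(m,k+1)+choose(m,k)) * (a * D) =
    --   2 * (2^(m-(k+1)) * choose(m,k+1) * ((a+k+1) * D)) + (2n-2m+k) * (2*2^(m-(k+1)) * choose(m,k) * D)
    have hcoef : 2 * n - 2 * m + k = a - m + k := by omega
    rw [hcoef]
    have key : (a + k + 1) * m.choose (k + 1) + (a - m + k) * m.choose k
        = a * m.choose (k + 1) + a * m.choose k := by
      have h4 : (k + 1) * m.choose (k + 1) = (m - k) * m.choose k := by
        rw [mul_comm (k + 1), mul_comm (m - k)]; exact hch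
      have h5 : (m - k) + (a - m + k) = a := by omega
      calc (a + k + 1) * m.choose (k + 1) + (a - m + k) * m.choose k
          = a * m.choose (k + 1) + ((k + 1) * m.choose (k + 1) + (a - m + k) * m.choose k) := by
            ring
        _ = a * m.choose (k + 1) + ((m - k) * m.choose k + (a - m + k) * m.choose k) := by
            rw [h4]
        _ = a * m.choose (k + 1) + ((m - k) + (a - m + k)) * m.choose k := by ring
        _ = a * m.choose (k + 1) + a * m.choose k := by rw [h5]
    set D := Nat.descFactorial (a + k) k with hD
    calc 2 * 2 ^ (m - (k + 1)) * (m.choose (k + 1) + m.choose k) * (a * D)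
        = 2 * 2 ^ (m - (k + 1)) * D * (a * m.choose (k + 1) + a * m.choose k) := by ring
      _ = 2 * 2 ^ (m - (k + 1)) * D *
          ((a + k + 1) * m.choose (k + 1) + (a - m + k) * m.choose k) := by rw [key]
      _ = 2 * (2 ^ (m - (k + 1)) * m.choose (k + 1) * ((a + k + 1) * D)) +
          (a - m + k) * (2 * 2 ^ (m - (k + 1)) * m.choose k * D) := by ring
  · -- k = m
    have hk' : k = m := le_antisymm hk hkm
    subst hk'
    have h6 : 2 * n - 2 * k + k = a := by omega
    rw [h6]
    simp [Nat.choose_succ_self, Nat.sub_self, Nat.choose_self]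
    left; rw [haa]

lemma hasDerivAt_term (e : ℕ) (he : 2 ≤ e) (x : ℝ) (hx : x ≠ 0) :
    HasDerivAt (fun y : ℝ => Real.exp (-2 / y) * y ^ e)
      (Real.exp (-2 / x) * (2 * x ^ (e - 2) + (e : ℝ) * x ^ (e - 1))) x := by
  have h0 : HasDerivAt (fun y : ℝ => -2 / y) (2 * (x ^ 2)⁻¹) x := by
    have h := (hasDerivAt_inv hx).const_mul (-2 : ℝ)
    have heq : (fun y : ℝ => -2 * y⁻¹) = fun y : ℝ => -2 / y := by
      funext y; rw [div_eq_mul_inv]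
    rw [heq] at h
    exact h.congr_deriv (by ring)
  have h1 : HasDerivAt (fun y : ℝ => Real.exp (-2 / y))
      (Real.exp (-2 / x) * (2 * (x ^ 2)⁻¹)) x := h0.exp
  have h2 : HasDerivAt (fun y : ℝ => y ^ e) ((e : ℝ) * x ^ (e - 1)) x :=
    hasDerivAt_pow e x
  have h3 := h1.mul h2
  refine h3.congr_deriv ?_
  have hxe : x ^ e = x ^ (e - 2) * x ^ 2 := by
    rw [← pow_add]
    congr 1
    omega
  rw [hxe]
  field_simp

/-- Key induction: closed form for the m-th iterated derivative. -/
lemma bessel_main (n : ℕ) : ∀ m, m ≤ n → ∀ x : ℝ, x ≠ 0 →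
    iteratedDeriv m (fun y : ℝ => Real.exp (-2 / y) * y ^ (2 * n)) x =
      Real.exp (-2 / x) *
        ∑ k ∈ Finset.range (m + 1), (besselC n m k : ℝ) * x ^ (2 * n - 2 * m + k) := by
  intro m
  induction m with
  | zero =>
    intro _ x hx
    simp [besselC]
  | succ m ih =>
    intro hm x hx
    have hm' : m ≤ n := by omega
    rw [iteratedDeriv_succ]
    -- replace the iterated derivative by its closed form near x
    have hev : iteratedDeriv m (fun y : ℝ => Real.exp (-2 / y) * y ^ (2 * n)) =ᶠ[nhds x]
        fun y : ℝ => ∑ k ∈ Finset.range (m + 1),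
          (besselC n m k : ℝ) * (Real.exp (-2 / y) * y ^ (2 * n - 2 * m + k)) := by
      filter_upwards [eventually_ne_nhds hx] with y hy
      rw [ih hm' y hy, Finset.mul_sum]
      exact Finset.sum_congr rfl fun k _ => by ring
    rw [hev.deriv_eq]
    have H : HasDerivAt (fun y : ℝ => ∑ k ∈ Finset.range (m + 1),
        (besselC n m k : ℝ) * (Real.exp (-2 / y) * y ^ (2 * n - 2 * m + k)))
        (∑ k ∈ Finset.range (m + 1), (besselC n m k : ℝ) *
          (Real.exp (-2 / x) * (2 * x ^ (2 * n - 2 * m + k - 2) +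
            ((2 * n - 2 * m + k : ℕ) : ℝ) * x ^ (2 * n - 2 * m + k - 1)))) x := by
      apply HasDerivAt.fun_sum
      intro k hk
      exact (hasDerivAt_term _ (by omega) x hx).const_mul _
    rw [H.deriv]
    -- now a purely algebraic identity
    have hE1 : ∀ k, 2 * n - 2 * m + k - 2 = 2 * n - 2 * (m + 1) + k := by
      intro k; omega
    have hE2 : ∀ k, 2 * n - 2 * m + k - 1 = 2 * n - 2 * (m + 1) + (k + 1) := by
      intro k; omega
    calc
      ∑ k ∈ Finset.range (m + 1), (besselC n m k : ℝ) *
          (Real.exp (-2 / x) * (2 * x ^ (2 * n - 2 * m + k - 2) +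
            ((2 * n - 2 * m + k : ℕ) : ℝ) * x ^ (2 * n - 2 * m + k - 1)))
        = Real.exp (-2 / x) *
          (∑ k ∈ Finset.range (m + 1), (2 * (besselC n m k : ℝ)) * x ^ (2 * n - 2 * (m + 1) + k)
           + ∑ k ∈ Finset.range (m + 1),
              (((2 * n - 2 * m + k : ℕ) : ℝ) * (besselC n m k : ℝ)) *
                x ^ (2 * n - 2 * (m + 1) + (k + 1))) := by
        rw [mul_add, Finset.mul_sum, Finset.mul_sum, ← Finset.sum_add_distrib]
        refine Finset.sum_congr rfl fun k _ => ?_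
        rw [hE1 k, hE2 k]
        ring
      _ = Real.exp (-2 / x) *
          ∑ k ∈ Finset.range (m + 1 + 1),
            (besselC n (m + 1) k : ℝ) * x ^ (2 * n - 2 * (m + 1) + k) := by
        congr 1
        rw [Finset.sum_range_succ' (fun k => (besselC n (m + 1) k : ℝ) *
          x ^ (2 * n - 2 * (m + 1) + k)) (m + 1)]
        rw [Finset.sum_range_succ' (fun k => (2 * (besselC n m k : ℝ)) *
          x ^ (2 * n - 2 * (m + 1) + k)) m]
        have hext : ∑ k ∈ Finset.range m,
            (2 * (besselC n m (k + 1) : ℝ)) * x ^ (2 * n - 2 * (m + 1) + (k + 1))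
            = ∑ k ∈ Finset.range (m + 1),
            (2 * (besselC n m (k + 1) : ℝ)) * x ^ (2 * n - 2 * (m + 1) + (k + 1)) := by
          rw [Finset.sum_range_succ]
          simp [besselC_top]
        rw [hext]
        have hsum : ∑ k ∈ Finset.range (m + 1),
            (besselC n (m + 1) (k + 1) : ℝ) * x ^ (2 * n - 2 * (m + 1) + (k + 1))
            = ∑ k ∈ Finset.range (m + 1),
              ((2 * (besselC n m (k + 1) : ℝ)) * x ^ (2 * n - 2 * (m + 1) + (k + 1)) +
               (((2 * n - 2 * m + k : ℕ) : ℝ) * (besselC n m k : ℝ)) *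
                 x ^ (2 * n - 2 * (m + 1) + (k + 1))) := by
          refine Finset.sum_congr rfl fun k hk => ?_
          rw [Finset.mem_range] at hk
          rw [besselC_rec n m k hm (by omega)]
          push_cast
          ring
        rw [hsum, Finset.sum_add_distrib]
        have hc : (besselC n (m + 1) 0 : ℝ) = 2 * (besselC n m 0 : ℝ) := by
          rw [besselC_zero, besselC_zero]
          push_cast [pow_succ]
          ring
        rw [hc]
        ring

/-- Classical Rodrigues formula for the Bessel polynomials (Krall–Frink):
`2^{−n}·e^{2/x}·(d/dy)^n [e^{−2/y}·y^{2n}]|_{y=x} = Σ_{k=0}^{n} ((n+k)!/((n−k)!·k!))·(x/2)^k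
= B_n(x)`. -/
theorem bessel_rodrigues (n : ℕ) (x : ℝ) (hx : x ≠ 0) :
    (2 : ℝ) ^ (-(n : ℤ)) * Real.exp (2 / x) *
        iteratedDeriv n (fun y : ℝ => Real.exp (-2 / y) * y ^ (2 * n)) x =
      ∑ k ∈ Finset.range (n + 1),
        (((n + k).factorial : ℝ) / (((n - k).factorial : ℝ) * (k.factorial : ℝ))) *
          (x / 2) ^ k := by
  rw [bessel_main n n le_rfl x hx]
  have hexp : Real.exp (2 / x) * Real.exp (-2 / x) = 1 := by
    rw [← Real.exp_add, show 2 / x + -2 / x = 0 by ring, Real.exp_zero]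
  rw [show (2 : ℝ) ^ (-(n : ℤ)) * Real.exp (2 / x) *
      (Real.exp (-2 / x) * ∑ k ∈ Finset.range (n + 1),
        (besselC n n k : ℝ) * x ^ (2 * n - 2 * n + k)) =
      (Real.exp (2 / x) * Real.exp (-2 / x)) * ((2 : ℝ) ^ (-(n : ℤ)) *
        ∑ k ∈ Finset.range (n + 1), (besselC n n k : ℝ) * x ^ (2 * n - 2 * n + k)) by ring,
    hexp, one_mul, Finset.mul_sum]
  refine Finset.sum_congr rfl fun k hk => ?_
  rw [Finset.mem_range] at hk
  have hkn : k ≤ n := by omega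
  have h1 : 2 * n - 2 * n + k = k := by omega
  rw [h1]
  unfold besselC
  have h2 : 2 * n - n = n := by omega
  rw [h2]
  -- ℕ identity: choose n k * descFactorial (n+k) k * ((n-k)! * k!) = (n+k)!
  have hnat : n.choose k * Nat.descFactorial (n + k) k * ((n - k).factorial * k.factorial)
      = (n + k).factorial := by
    have hc : n.choose k * k.factorial * (n - k).factorial = n.factorial :=
      Nat.choose_mul_factorial_mul_factorial hkn
    have hd : n.factorial * Nat.descFactorial (n + k) k = (n + k).factorial := by
      have := Nat.factorial_mul_descFactorial (show k ≤ n + k by omega)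
      rwa [show n + k - k = n by omega] at this
    calc n.choose k * Nat.descFactorial (n + k) k * ((n - k).factorial * k.factorial)
        = (n.choose k * k.factorial * (n - k).factorial) * Nat.descFactorial (n + k) k := by ring
      _ = n.factorial * Nat.descFactorial (n + k) k := by rw [hc]
      _ = (n + k).factorial := hd
  have hreal : (n.choose k : ℝ) * (Nat.descFactorial (n + k) k : ℝ)
      = ((n + k).factorial : ℝ) / (((n - k).factorial : ℝ) * (k.factorial : ℝ)) := by
    rw [eq_div_iff (by positivity)]
    exact_mod_cast hnat
  have hpow : ((2 : ℕ) ^ (n - k) : ℝ) = 2 ^ n / 2 ^ k := by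
    push_cast
    rw [pow_sub₀ (2 : ℝ) (by norm_num) hkn, div_eq_mul_inv]
  have hzpow : (2 : ℝ) ^ (-(n : ℤ)) = (2 ^ n)⁻¹ := by
    rw [zpow_neg, zpow_natCast]
  rw [hzpow]
  push_cast [hpow] at *
  rw [div_pow]
  rw [← hreal]
  have h2n : (2 : ℝ) ^ n ≠ 0 := by positivity
  have h2k : (2 : ℝ) ^ k ≠ 0 := by positivity
  field_simp
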